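/- Let a, b, c, d be complex numbers and define p₁ = −(|a|²+|b|²), p₂ = −2|c|² − |d|² − 2Re(a·b·conj(d)) − 2Re(a²·conj(c)), p₃ = −2Re(conj(a)·b·c·conj(d)) + |c|²(|b|²−|a|²), p₄ = |c|²(|c|²+|d|²). Assume: (B) |a|²(1+|c|²) + |b|²(1−|c|²) + 2Re(conj(a)·b·c·conj(d)) < (1−|c|²)² − (1−|c|²)|d|² − 2Re(a·b·conj(d)) − 2Re(a²·conj(c)); (D) |c|² + |d|² < 1; (E) Re(a·b·conj(d)) + Re(conj(a)·b·c·conj(d)) ≥ 0 and Re(a²·conj(c)) ≥ −|a|²|c|². Then p₂ + p₃ − p₁ + 3p₄ < 1. -/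

import Mathlib

open ComplexConjugate

/-- Under conditions (B), (D), (E): `p₂ + p₃ - p₁ + 3 p₄ < 1`. -/
theorem stmt_5 (a b c d : ℂ)
    (p₁ p₂ p₃ p₄ : ℝ)
    (hp₁ : p₁ = -(‖a‖ ^ 2 + ‖b‖ ^ 2))
    (hp₂ : p₂ = -2 * ‖c‖ ^ 2 - ‖d‖ ^ 2
        - 2 * (a * b * conj d).re - 2 * (a ^ 2 * conj c).re)
    (hp₃ : p₃ = -2 * (conj a * b * c * conj d).re
        + ‖c‖ ^ 2 * (‖b‖ ^ 2 - ‖a‖ ^ 2))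
    (hp₄ : p₄ = ‖c‖ ^ 2 * (‖c‖ ^ 2 + ‖d‖ ^ 2))
    (hB : ‖a‖ ^ 2 * (1 + ‖c‖ ^ 2)
        + ‖b‖ ^ 2 * (1 - ‖c‖ ^ 2)
        + 2 * (conj a * b * c * conj d).re
        < (1 - ‖c‖ ^ 2) ^ 2 - (1 - ‖c‖ ^ 2) * ‖d‖ ^ 2
          - 2 * (a * b * conj d).re - 2 * (a ^ 2 * conj c).re)
    (hD : ‖c‖ ^ 2 + ‖d‖ ^ 2 < 1)
    (hE₁ : 0 ≤ (a * b * conj d).re + (conj a * b * c * conj d).re)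
    (hE₂ : (a ^ 2 * conj c).re ≥ -(‖a‖ ^ 2 * ‖c‖ ^ 2)) :
    p₂ + p₃ - p₁ + 3 * p₄ < 1 := by
  subst hp₁ hp₂ hp₃ hp₄
  set A := ‖a‖ ^ 2 with hA
  set B := ‖b‖ ^ 2 with hBB
  set C := ‖c‖ ^ 2 with hC
  set D := ‖d‖ ^ 2 with hDD
  set P := (a * b * conj d).re with hP
  set Q := (conj a * b * c * conj d).re with hQ
  set R := (a ^ 2 * conj c).re with hR
  have hA0 : 0 ≤ A := by positivity
  have hB0 : 0 ≤ B := by positivity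
  have hC0 : 0 ≤ C := by positivity
  have hD0 : 0 ≤ D := by positivity
  have hC1 : C < 1 := by linarith
  have hs : 0 ≤ P + Q := hE₁
  have ht : 0 ≤ R + A * C := by linarith [hE₂]
  nlinarith [mul_pos (show (0:ℝ) < 1 + C by linarith)
      (sub_pos.2 hB),
    mul_nonneg hs hC0, mul_nonneg ht hC0,
    mul_nonneg (mul_nonneg hA0 hC0) hC0,
    mul_nonneg (add_nonneg hC0 hD0) (show (0:ℝ) ≤ 1 - C by linarith),
    mul_nonneg hA0 hC0, mul_nonneg hB0 hC0,
    mul_nonneg (mul_nonneg hC0 hC0) hD0]
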